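/- Theorem 2 (graph form): For natural numbers m, n with 1 ≤ m ≤ n, let G be the box (Cartesian) product of the path graph on m vertices with the path graph on n vertices, let f₀ = m·n be its number of vertices and f₁ its number of edges. Then (f₀ + 2)² ≥ 8·(f₁ + 2) holds if and only if it is NOT the case that (m = 1 and n ≤ 4) or (m = 2 and n ≤ 3). -/

import Mathlib

open SimpleGraph Finset

instance pathGraphAdjDecidable (n : ℕ) : DecidableRel (SimpleGraph.pathGraph n).Adj :=
  fun _ _ => decidable_of_iff _ SimpleGraph.pathGraph_adj.symm

instance boxProdAdjDecidable {α β : Type*} (G : SimpleGraph α) (H : SimpleGraph β)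
    [DecidableEq α] [DecidableEq β] [DecidableRel G.Adj] [DecidableRel H.Adj] :
    DecidableRel (G □ H).Adj := fun x y =>
  decidable_of_iff ((G.Adj x.1 y.1 ∧ x.2 = y.2) ∨ (H.Adj x.2 y.2 ∧ x.1 = y.1)) Iff.rfl

lemma pathGraph_edgeFinset_card (k : ℕ) :
    (pathGraph (k + 1)).edgeFinset.card = k := by
  have himg : (pathGraph (k + 1)).edgeFinset =
      Finset.image (fun i : Fin k => s(i.castSucc, i.succ)) Finset.univ := by
    ext e
    refine e.ind (fun u v => ?_)
    simp only [mem_edgeFinset, mem_edgeSet, Finset.mem_image, Finset.mem_univ, true_and]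
    constructor
    · intro h
      rw [pathGraph_adj] at h
      rcases h with h | h
      · have hu : u.val < k := by omega
        refine ⟨⟨u.val, hu⟩, ?_⟩
        have h1 : (⟨u.val, hu⟩ : Fin k).castSucc = u := by ext; simp
        have h2 : (⟨u.val, hu⟩ : Fin k).succ = v := by ext; simp [h]
        rw [h1, h2]
      · have hv : v.val < k := by omega
        refine ⟨⟨v.val, hv⟩, ?_⟩
        have h1 : (⟨v.val, hv⟩ : Fin k).castSucc = v := by ext; simp
        have h2 : (⟨v.val, hv⟩ : Fin k).succ = u := by ext; simp [h]
        rw [h1, h2, Sym2.eq_swap]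
    · rintro ⟨i, hi⟩
      have := Sym2.eq_iff.mp hi.symm
      rw [pathGraph_adj]
      rcases this with ⟨h1, h2⟩ | ⟨h1, h2⟩ <;> subst h1 <;> subst h2 <;> simp
  rw [himg, Finset.card_image_of_injective _ ?_, Finset.card_univ, Fintype.card_fin]
  intro i j h
  rw [Sym2.eq_iff] at h
  rcases h with ⟨h1, _⟩ | ⟨h1, h2⟩
  · exact Fin.castSucc_injective _ h1
  · have e1 := congrArg Fin.val h1
    have e2 := congrArg Fin.val h2
    simp [Fin.val_succ] at e1 e2
    ext; omega

lemma pathGraph_degree_sum (k : ℕ) :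
    ∑ v : Fin (k + 1), (pathGraph (k + 1)).degree v = 2 * k := by
  rw [SimpleGraph.sum_degrees_eq_twice_card_edges, pathGraph_edgeFinset_card]

lemma boxProd_edge_count (m n : ℕ) (hm : 1 ≤ m) (hn : 1 ≤ n) :
    ((pathGraph m) □ (pathGraph n)).edgeSet.ncard = m * (n - 1) + n * (m - 1) := by
  obtain ⟨a, rfl⟩ : ∃ a, m = a + 1 := ⟨m - 1, by omega⟩
  obtain ⟨b, rfl⟩ : ∃ b, n = b + 1 := ⟨n - 1, by omega⟩
  have hcard : ((pathGraph (a+1)) □ (pathGraph (b+1))).edgeSet.ncard =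
      ((pathGraph (a+1)) □ (pathGraph (b+1))).edgeFinset.card := by
    rw [Set.ncard_eq_toFinset_card']
    exact congrArg Finset.card (by ext; simp)
  rw [hcard]
  have hsum : ∑ v : Fin (a+1) × Fin (b+1),
      @SimpleGraph.degree _ ((pathGraph (a+1)) □ (pathGraph (b+1))) v
        (SimpleGraph.neighborSetFintype _ _)
      = 2 * ((pathGraph (a+1)) □ (pathGraph (b+1))).edgeFinset.card :=
    SimpleGraph.sum_degrees_eq_twice_card_edges _
  have hd : ∀ x : Fin (a+1) × Fin (b+1),
      @SimpleGraph.degree _ ((pathGraph (a+1)) □ (pathGraph (b+1))) x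
        (SimpleGraph.neighborSetFintype _ _)
      = (pathGraph (a+1)).degree x.1 + (pathGraph (b+1)).degree x.2 := fun x =>
    @SimpleGraph.degree_boxProd _ _ _ _ x _ _ (SimpleGraph.neighborSetFintype _ _)
  have h2 : 2 * ((pathGraph (a+1)) □ (pathGraph (b+1))).edgeFinset.card
      = 2 * ((a+1) * b + (b+1) * a) := by
    rw [← hsum]
    calc ∑ x : Fin (a+1) × Fin (b+1),
        @SimpleGraph.degree _ ((pathGraph (a+1)) □ (pathGraph (b+1))) x
          (SimpleGraph.neighborSetFintype _ _)
        = ∑ i : Fin (a+1), ∑ j : Fin (b+1),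
            ((pathGraph (a+1)).degree i + (pathGraph (b+1)).degree j) := by
          rw [Fintype.sum_congr _ _ hd, Fintype.sum_prod_type]
      _ = ∑ i : Fin (a+1), ((b+1) * (pathGraph (a+1)).degree i + 2*b) := by
          refine Finset.sum_congr rfl fun i _ => ?_
          rw [Finset.sum_add_distrib, Finset.sum_const, pathGraph_degree_sum]
          simp [mul_comm]
      _ = (b+1) * (2*a) + (a+1) * (2*b) := by
          rw [Finset.sum_add_distrib, ← Finset.mul_sum, pathGraph_degree_sum,
            Finset.sum_const]
          simp [mul_comm]
      _ = 2 * ((a+1) * b + (b+1) * a) := by ring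
  have := Nat.eq_of_mul_eq_mul_left (by norm_num : 0 < 2) h2
  simpa using this

/-- Theorem 2, graph form: For `1 ≤ m ≤ n`, let `G = P_m □ P_n` be the
rectangular grid graph, with `f₀ = mn` vertices and `f₁` edges.  Then
`(f₀ + 2)² ≥ 8·(f₁ + 2)` holds iff it is NOT the case that (`m = 1` and `n ≤ 4`) or
(`m = 2` and `n ≤ 3`). -/
theorem rect_grid_real_iff (m n : ℕ) (hm : 1 ≤ m) (hmn : m ≤ n) (f₀ f₁ : ℕ)
    (hf₀ : f₀ = m * n)
    (hf₁ : f₁ = ((SimpleGraph.pathGraph m).boxProd (SimpleGraph.pathGraph n)).edgeSet.ncard) :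
    (f₀ + 2) ^ 2 ≥ 8 * (f₁ + 2) ↔ ¬ ((m = 1 ∧ n ≤ 4) ∨ (m = 2 ∧ n ≤ 3)) := by
  have hn : 1 ≤ n := le_trans hm hmn
  rw [hf₀, hf₁, boxProd_edge_count m n hm hn]
  obtain ⟨a, rfl⟩ : ∃ a, m = a + 1 := ⟨m - 1, by omega⟩
  obtain ⟨b, rfl⟩ : ∃ b, n = b + 1 := ⟨n - 1, by omega⟩
  simp only [Nat.add_sub_cancel]
  constructor
  · intro h hc
    rcases hc with ⟨h1, h2⟩ | ⟨h1, h2⟩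
    · obtain rfl : a = 0 := by omega
      have hb : b ≤ 3 := by omega
      interval_cases b <;> norm_num at h
    · obtain rfl : a = 1 := by omega
      have hb : b ≤ 2 := by omega
      interval_cases b <;> norm_num at h
  · intro h
    rcases Nat.lt_or_ge a 2 with ha | ha
    · interval_cases a
      · have hb : b ≥ 4 := by omega
        nlinarith [hb, Nat.mul_le_mul hb hb]
      · have hb : b ≥ 3 := by omega
        nlinarith [hb, Nat.mul_le_mul hb hb]
    · have hab : a ≤ b := by omega
      have hb : 2 ≤ b := le_trans ha hab
      have p1 : 2*b ≤ a*b := Nat.mul_le_mul_right b ha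
      have p2 : 2*a ≤ b*a := Nat.mul_le_mul_right a hb
      have p3 : 4 ≤ a*b := by calc 4 = 2*2 := rfl
                                  _ ≤ a*b := Nat.mul_le_mul ha hb
      have p4 : 4*(a*b) ≤ (a*b)*(a*b) := Nat.mul_le_mul_right _ p3
      have p6 : 2*a ≤ a*a := Nat.mul_le_mul_right a ha
      have p7 : 2*b ≤ b*b := Nat.mul_le_mul_right b hb
      have p8 : (2*b)*a ≤ (a*b)*a := Nat.mul_le_mul_right a p1
      nlinarith [p1, p2, p3, p4, p6, p7, p8]
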